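/- If G is dicotic and x is a dyadic rational, then G → x = G + x as game values. -/

import Mathlib

universe u

namespace SetTheory

/-- Combinatorial pregames (removed from Mathlib; restored with the old definition). -/
inductive PGame : Type (u + 1)
  | mk : ∀ α β : Type u, (α → PGame) → (β → PGame) → PGame

namespace PGame

def LeftMoves : PGame.{u} → Type u
  | mk l _ _ _ => l

def RightMoves : PGame.{u} → Type u
  | mk _ r _ _ => r

def moveLeft : ∀ g : PGame.{u}, LeftMoves g → PGame.{u}
  | mk _ _ L _ => L

def moveRight : ∀ g : PGame.{u}, RightMoves g → PGame.{u}
  | mk _ _ _ R => R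

instance : Zero PGame.{u} :=
  ⟨⟨PEmpty, PEmpty, PEmpty.elim, PEmpty.elim⟩⟩

instance : One PGame.{u} :=
  ⟨⟨PUnit, PEmpty, fun _ => 0, PEmpty.elim⟩⟩

/-- The pair `(x ≤ y, x ⧏ y)`, defined by simultaneous recursion as in old Mathlib. -/
noncomputable def leLF (x : PGame.{u}) : PGame.{u} → Prop × Prop := by
  induction x with | mk xl xr xL xR IHxl IHxr => ?_
  intro y
  induction y with | mk yl yr yL yR IHyl IHyr => ?_
  exact ((∀ i, (IHxl i (mk yl yr yL yR)).2) ∧ ∀ j, (IHyr j).2,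
    (∃ i, (IHyl i).1) ∨ ∃ j, (IHxr j (mk yl yr yL yR)).1)

noncomputable instance : LE PGame.{u} :=
  ⟨fun x y => (leLF x y).1⟩

/-- Game equivalence `x ≈ y ↔ x ≤ y ∧ y ≤ x`. -/
noncomputable instance : HasEquiv PGame.{u} :=
  ⟨fun x y => x ≤ y ∧ y ≤ x⟩

def neg : PGame.{u} → PGame.{u}
  | mk l r L R => mk r l (fun i => neg (R i)) (fun i => neg (L i))

instance : Neg PGame.{u} :=
  ⟨neg⟩

/-- Inner recursion of the sum `x + y` on `y`, given the sums with the options of `x`. -/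
def addAux (xl xr : Type u) (IHl : xl → PGame.{u} → PGame.{u})
    (IHr : xr → PGame.{u} → PGame.{u}) : PGame.{u} → PGame.{u}
  | mk yl yr yL yR =>
    mk (xl ⊕ yl) (xr ⊕ yr)
      (Sum.rec (fun i => IHl i (mk yl yr yL yR)) (fun i => addAux xl xr IHl IHr (yL i)))
      (Sum.rec (fun i => IHr i (mk yl yr yL yR)) (fun i => addAux xl xr IHl IHr (yR i)))

/-- The disjunctive sum of pregames. -/
def add : PGame.{u} → PGame.{u} → PGame.{u}
  | mk xl xr xL xR => addAux xl xr (fun i => add (xL i)) (fun i => add (xR i))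

instance : Add PGame.{u} :=
  ⟨add⟩

instance : Sub PGame.{u} :=
  ⟨fun x y => x + -y⟩

/-- The game `∗ = {0 | 0}`. -/
def star : PGame.{u} :=
  ⟨PUnit, PUnit, fun _ => 0, fun _ => 0⟩

/-- `powHalf n` is the pregame for `1 / 2 ^ n`. -/
def powHalf : ℕ → PGame
  | 0 => 1
  | n + 1 => ⟨PUnit, PUnit, fun _ => 0, fun _ => powHalf n⟩

/-- A short pregame: finitely many positions, with decidable equality on moves. -/
class inductive Short : PGame.{u} → Type (u + 1)
  | mk : ∀ {α β : Type u} {L : α → PGame.{u}} {R : β → PGame.{u}} (_ : ∀ i : α, Short (L i))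
      (_ : ∀ j : β, Short (R j)) [Fintype α] [Fintype β] [DecidableEq α] [DecidableEq β],
      Short ⟨α, β, L, R⟩

/-- `n • x` as the iterated sum `x + ⋯ + x` (as `nsmulRec` in `Game`). -/
def nsmulPG : ℕ → PGame.{u} → PGame.{u}
  | 0, _ => 0
  | n + 1, x => nsmulPG n x + x

/-- `m • x` for `m : ℤ` (as `zsmulRec` in `Game`). -/
def zsmulPG : ℤ → PGame.{u} → PGame.{u}
  | Int.ofNat n, x => nsmulPG n x
  | Int.negSucc n, x => -(nsmulPG (n + 1) x)

end PGame

end SetTheory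

open SetTheory

open scoped PGame

namespace SeqCompound

open Classical in
/-- The sequential compound `G → H` of two pregames. -/
noncomputable def seqc : PGame → PGame → PGame
  | PGame.mk α β L R, H =>
    if Nonempty α then
      if Nonempty β then
        PGame.mk α β (fun a => seqc (L a) H) (fun b => seqc (R b) H)
      else
        PGame.mk α H.RightMoves (fun a => seqc (L a) H) H.moveRight
    else
      if Nonempty β then
        PGame.mk H.LeftMoves β H.moveLeft (fun b => seqc (R b) H)
      else H

/-- A pregame is dicotic (all-small) if in every subposition,
Left has an option iff Right has an option. -/
def Dicotic : PGame → Prop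
  | PGame.mk α β L R =>
    (Nonempty α ↔ Nonempty β) ∧ (∀ a, Dicotic (L a)) ∧ (∀ b, Dicotic (R b))

/-- The canonical nonnegative integer game `{n-1 | }`. -/
def intGame : ℕ → PGame
  | 0 => 0
  | n + 1 => PGame.mk PUnit PEmpty (fun _ => intGame n) PEmpty.elim

/-- `upSum k` is the disjunctive sum `↑¹ + ↑² + ⋯ + ↑ᵏ`. -/
def upSum : ℕ → PGame
  | 0 => 0
  | k + 1 => upSum k +
      PGame.mk PUnit PUnit (fun _ => 0) (fun _ => PGame.star - upSum k)

/-- `upPow k` is the game `↑^(k+1) = {0 | ∗ - (↑¹ + ⋯ + ↑ᵏ)}`. -/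
def upPow (k : ℕ) : PGame :=
  PGame.mk PUnit PUnit (fun _ => 0) (fun _ => PGame.star - upSum k)

/-- Sequential compound of a list of games. -/
noncomputable def seqList : List PGame → PGame
  | [] => 0
  | G :: l => seqc G (seqList l)

end SeqCompound

namespace SetTheory

namespace PGame

/-- The less-or-fuzzy relation. -/
def LF (x y : PGame.{u}) : Prop :=
  (leLF x y).2

infix:50 " ⧏ " => LF

theorem mk_le_mk {xl xr : Type u} {xL : xl → PGame.{u}} {xR : xr → PGame.{u}}
    {yl yr : Type u} {yL : yl → PGame.{u}} {yR : yr → PGame.{u}} :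
    mk xl xr xL xR ≤ mk yl yr yL yR ↔
      (∀ i, xL i ⧏ mk yl yr yL yR) ∧ ∀ j, mk xl xr xL xR ⧏ yR j :=
  Iff.rfl

theorem mk_lf_mk {xl xr : Type u} {xL : xl → PGame.{u}} {xR : xr → PGame.{u}}
    {yl yr : Type u} {yL : yl → PGame.{u}} {yR : yr → PGame.{u}} :
    mk xl xr xL xR ⧏ mk yl yr yL yR ↔
      (∃ i, mk xl xr xL xR ≤ yL i) ∨ ∃ j, xR j ≤ mk yl yr yL yR :=
  Iff.rfl

theorem le_iff_forall_lf {x y : PGame.{u}} :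
    x ≤ y ↔ (∀ i, x.moveLeft i ⧏ y) ∧ ∀ j, x ⧏ y.moveRight j := by
  cases x; cases y; exact Iff.rfl

theorem lf_iff_exists_le {x y : PGame.{u}} :
    x ⧏ y ↔ (∃ i, x ≤ y.moveLeft i) ∨ ∃ j, x.moveRight j ≤ y := by
  cases x; cases y; exact Iff.rfl

theorem not_le_aux (x : PGame.{u}) :
    ∀ y : PGame.{u}, (x ≤ y ↔ ¬ y ⧏ x) ∧ (y ≤ x ↔ ¬ x ⧏ y) := by
  induction x with
  | mk xl xr xL xR IHl IHr =>
  intro y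
  induction y with
  | mk yl yr yL yR IHl' IHr' =>
  constructor
  · rw [mk_le_mk, mk_lf_mk, not_or, not_exists, not_exists]
    refine and_congr (forall_congr' fun i => ?_) (forall_congr' fun j => ?_)
    · rw [(IHl i _).2, not_not]
    · rw [(IHr' j).2, not_not]
  · rw [mk_le_mk, mk_lf_mk, not_or, not_exists, not_exists]
    refine and_congr (forall_congr' fun i => ?_) (forall_congr' fun j => ?_)
    · rw [(IHl' i).1, not_not]
    · rw [(IHr j _).1, not_not]

theorem not_le {x y : PGame.{u}} : ¬ x ≤ y ↔ y ⧏ x := by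
  rw [(not_le_aux x y).1, not_not]

theorem not_lf {x y : PGame.{u}} : ¬ x ⧏ y ↔ y ≤ x :=
  ((not_le_aux x y).2).symm

theorem le_rfl' : ∀ {x : PGame.{u}}, x ≤ x := by
  intro x
  induction x with
  | mk xl xr xL xR IHl IHr =>
    rw [le_iff_forall_lf]
    exact ⟨fun i => lf_iff_exists_le.2 (Or.inl ⟨i, IHl i⟩),
      fun j => lf_iff_exists_le.2 (Or.inr ⟨j, IHr j⟩)⟩

theorem lf_of_le_moveLeft {x y : PGame.{u}} {i : y.LeftMoves} (h : x ≤ y.moveLeft i) : x ⧏ y :=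
  lf_iff_exists_le.2 (Or.inl ⟨i, h⟩)

theorem lf_of_moveRight_le {x y : PGame.{u}} {j : x.RightMoves} (h : x.moveRight j ≤ y) :
    x ⧏ y :=
  lf_iff_exists_le.2 (Or.inr ⟨j, h⟩)

theorem moveLeft_lf {x : PGame.{u}} (i : x.LeftMoves) : x.moveLeft i ⧏ x :=
  lf_of_le_moveLeft le_rfl'

theorem lf_moveRight {x : PGame.{u}} (j : x.RightMoves) : x ⧏ x.moveRight j :=
  lf_of_moveRight_le le_rfl'

theorem le_moveLeft_lf {x y : PGame.{u}} (h : x ≤ y) (i : x.LeftMoves) : x.moveLeft i ⧏ y :=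
  (le_iff_forall_lf.1 h).1 i

theorem lf_moveRight_of_le {x y : PGame.{u}} (h : x ≤ y) (j : y.RightMoves) :
    x ⧏ y.moveRight j :=
  (le_iff_forall_lf.1 h).2 j

theorem le_trans_aux {x y z : PGame.{u}}
    (h₁ : ∀ {i}, y ≤ z → z ≤ x.moveLeft i → y ≤ x.moveLeft i)
    (h₂ : ∀ {j}, z.moveRight j ≤ x → x ≤ y → z.moveRight j ≤ y) (hxy : x ≤ y) (hyz : y ≤ z) :
    x ≤ z :=
  le_iff_forall_lf.2
    ⟨fun i => not_le.1 fun h => not_lf.2 (h₁ hyz h) (le_moveLeft_lf hxy i),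
      fun j => not_le.1 fun h => not_lf.2 (h₂ h hxy) (lf_moveRight_of_le hyz j)⟩

theorem le_trans_all (x : PGame.{u}) : ∀ y z : PGame.{u},
    (x ≤ y → y ≤ z → x ≤ z) ∧ (y ≤ z → z ≤ x → y ≤ x) ∧ (z ≤ x → x ≤ y → z ≤ y) := by
  induction x with
  | mk xl xr xL xR IHxl IHxr =>
  intro y
  induction y with
  | mk yl yr yL yR IHyl IHyr =>
  intro z
  induction z with
  | mk zl zr zL zR IHzl IHzr =>
  exact ⟨le_trans_aux (fun {i} => (IHxl i _ _).2.1) (fun {j} => (IHzr j).2.2),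
    le_trans_aux (fun {i} => (IHyl i _).2.2) (fun {j} => (IHxr j _ _).1),
    le_trans_aux (fun {i} => (IHzl i).1) (fun {j} => (IHyr j _).2.1)⟩

theorem le_trans' {x y z : PGame.{u}} : x ≤ y → y ≤ z → x ≤ z :=
  (le_trans_all x y z).1

instance : Preorder PGame.{u} where
  le x y := x ≤ y
  le_refl _ := le_rfl'
  le_trans _ _ _ := le_trans'
  lt x y := x ≤ y ∧ ¬ y ≤ x
  lt_iff_le_not_ge _ _ := Iff.rfl

theorem _root_.LE.le.trans_lf {x y z : PGame.{u}} (h₁ : x ≤ y) (h₂ : y ⧏ z) : x ⧏ z :=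
  not_le.1 fun h => not_le.2 h₂ (le_trans' h h₁)

theorem LF.trans_le {x y z : PGame.{u}} (h₁ : x ⧏ y) (h₂ : y ≤ z) : x ⧏ z :=
  not_le.1 fun h => not_le.2 h₁ (le_trans' h₂ h)

theorem lf_of_lt {x y : PGame.{u}} (h : x < y) : x ⧏ y :=
  not_le.1 (lt_iff_le_not_ge.1 h).2

theorem equiv_trans' {x y z : PGame.{u}} (h₁ : x ≈ y) (h₂ : y ≈ z) : x ≈ z :=
  ⟨le_trans' h₁.1 h₂.1, le_trans' h₂.2 h₁.2⟩

theorem le_congr' {x₁ y₁ x₂ y₂ : PGame.{u}} (hx : x₁ ≈ x₂) (hy : y₁ ≈ y₂) :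
    x₁ ≤ y₁ ↔ x₂ ≤ y₂ :=
  ⟨fun h => le_trans' hx.2 (le_trans' h hy.1), fun h => le_trans' hx.1 (le_trans' h hy.2)⟩

instance setoid : Setoid PGame.{u} :=
  ⟨fun x y => x ≈ y, ⟨fun _ => ⟨le_rfl', le_rfl'⟩, fun h => ⟨h.2, h.1⟩, fun h₁ h₂ => equiv_trans' h₁ h₂⟩⟩

instance isEmpty_leftMoves_zero : IsEmpty (LeftMoves (0 : PGame.{u})) :=
  inferInstanceAs (IsEmpty PEmpty)

instance isEmpty_rightMoves_zero : IsEmpty (RightMoves (0 : PGame.{u})) :=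
  inferInstanceAs (IsEmpty PEmpty)

theorem equiv_of_mk_equiv {x y : PGame.{u}} (L : x.LeftMoves ≃ y.LeftMoves)
    (R : x.RightMoves ≃ y.RightMoves) (hl : ∀ i, x.moveLeft i ≈ y.moveLeft (L i))
    (hr : ∀ j, x.moveRight j ≈ y.moveRight (R j)) : x ≈ y := by
  constructor <;> rw [le_iff_forall_lf] <;> constructor
  · intro i
    exact lf_of_le_moveLeft (hl i).1
  · intro j
    refine lf_of_moveRight_le (j := R.symm j) ?_
    have := (hr (R.symm j)).1
    rwa [R.apply_symm_apply] at this
  · intro i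
    refine lf_of_le_moveLeft (i := L.symm i) ?_
    have := (hl (L.symm i)).2
    rwa [L.apply_symm_apply] at this
  · intro j
    exact lf_of_moveRight_le (hr j).2

/-! Sums -/

theorem leftMoves_add (x y : PGame.{u}) : (x + y).LeftMoves = (x.LeftMoves ⊕ y.LeftMoves) := by
  cases x; cases y; rfl

theorem rightMoves_add (x y : PGame.{u}) :
    (x + y).RightMoves = (x.RightMoves ⊕ y.RightMoves) := by
  cases x; cases y; rfl

def toLeftMovesAdd {x y : PGame.{u}} : x.LeftMoves ⊕ y.LeftMoves ≃ (x + y).LeftMoves :=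
  Equiv.cast (leftMoves_add x y).symm

def toRightMovesAdd {x y : PGame.{u}} : x.RightMoves ⊕ y.RightMoves ≃ (x + y).RightMoves :=
  Equiv.cast (rightMoves_add x y).symm

theorem add_moveLeft_inl {x y : PGame.{u}} (i : x.LeftMoves) :
    (x + y).moveLeft (toLeftMovesAdd (Sum.inl i)) = x.moveLeft i + y := by
  cases x; cases y; rfl

theorem add_moveLeft_inr {x y : PGame.{u}} (i : y.LeftMoves) :
    (x + y).moveLeft (toLeftMovesAdd (Sum.inr i)) = x + y.moveLeft i := by
  cases x; cases y; rfl

theorem add_moveRight_inl {x y : PGame.{u}} (i : x.RightMoves) :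
    (x + y).moveRight (toRightMovesAdd (Sum.inl i)) = x.moveRight i + y := by
  cases x; cases y; rfl

theorem add_moveRight_inr {x y : PGame.{u}} (i : y.RightMoves) :
    (x + y).moveRight (toRightMovesAdd (Sum.inr i)) = x + y.moveRight i := by
  cases x; cases y; rfl

theorem leftMoves_add_cases {x y : PGame.{u}} {P : (x + y).LeftMoves → Prop} (k : (x + y).LeftMoves)
    (hl : ∀ i, P (toLeftMovesAdd (Sum.inl i))) (hr : ∀ i, P (toLeftMovesAdd (Sum.inr i))) :
    P k := by
  rw [← toLeftMovesAdd.apply_symm_apply k]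
  rcases toLeftMovesAdd.symm k with i | i
  · exact hl i
  · exact hr i

theorem rightMoves_add_cases {x y : PGame.{u}} {P : (x + y).RightMoves → Prop}
    (k : (x + y).RightMoves)
    (hl : ∀ i, P (toRightMovesAdd (Sum.inl i))) (hr : ∀ i, P (toRightMovesAdd (Sum.inr i))) :
    P k := by
  rw [← toRightMovesAdd.apply_symm_apply k]
  rcases toRightMovesAdd.symm k with i | i
  · exact hl i
  · exact hr i

theorem add_le_lf_aux (x : PGame.{u}) : ∀ y z : PGame.{u},
    (x ≤ y → x + z ≤ y + z) ∧ (x ⧏ y → x + z ⧏ y + z) := by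
  induction x with
  | mk xl xr xL xR IHxl IHxr =>
  intro y
  induction y with
  | mk yl yr yL yR IHyl IHyr =>
  intro z
  induction z with
  | mk zl zr zL zR IHzl IHzr =>
  constructor
  · intro h
    rw [le_iff_forall_lf]
    constructor
    · intro k
      refine leftMoves_add_cases (P := fun k => (mk xl xr xL xR + mk zl zr zL zR).moveLeft k ⧏
        mk yl yr yL yR + mk zl zr zL zR) k ?_ ?_
      · intro i
        rw [add_moveLeft_inl]
        exact (IHxl i _ _).2 (le_moveLeft_lf h i)
      · intro i
        rw [add_moveLeft_inr]
        refine lf_of_le_moveLeft (i := toLeftMovesAdd (Sum.inr i)) ?_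
        rw [add_moveLeft_inr]
        exact (IHzl i).1 h
    · intro k
      refine rightMoves_add_cases (P := fun k => mk xl xr xL xR + mk zl zr zL zR ⧏
        (mk yl yr yL yR + mk zl zr zL zR).moveRight k) k ?_ ?_
      · intro j
        rw [add_moveRight_inl]
        exact (IHyr j _).2 (lf_moveRight_of_le h j)
      · intro j
        rw [add_moveRight_inr]
        refine lf_of_moveRight_le (j := toRightMovesAdd (Sum.inr j)) ?_
        rw [add_moveRight_inr]
        exact (IHzr j).1 h
  · intro h
    rcases lf_iff_exists_le.1 h with ⟨i, hi⟩ | ⟨j, hj⟩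
    · refine lf_of_le_moveLeft (i := toLeftMovesAdd (Sum.inl i)) ?_
      rw [add_moveLeft_inl]
      exact (IHyl i _).1 hi
    · refine lf_of_moveRight_le (j := toRightMovesAdd (Sum.inl j)) ?_
      rw [add_moveRight_inl]
      exact (IHxr j _ _).1 hj

theorem add_le_add_right' {x y z : PGame.{u}} (h : x ≤ y) : x + z ≤ y + z :=
  (add_le_lf_aux x y z).1 h

theorem add_comm_equiv (x : PGame.{u}) : ∀ y : PGame.{u}, x + y ≈ y + x := by
  induction x with
  | mk xl xr xL xR IHl IHr =>
  intro y
  induction y with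
  | mk yl yr yL yR IHl' IHr' =>
  refine equiv_of_mk_equiv (Equiv.sumComm _ _) (Equiv.sumComm _ _) ?_ ?_
  · rintro (i | i)
    · exact IHl i _
    · exact IHl' i
  · rintro (i | i)
    · exact IHr i _
    · exact IHr' i

theorem add_assoc_equiv (x : PGame.{u}) : ∀ y z : PGame.{u}, x + y + z ≈ x + (y + z) := by
  induction x with
  | mk xl xr xL xR IHxl IHxr =>
  intro y
  induction y with
  | mk yl yr yL yR IHyl IHyr =>
  intro z
  induction z with
  | mk zl zr zL zR IHzl IHzr =>
  refine equiv_of_mk_equiv (Equiv.sumAssoc _ _ _) (Equiv.sumAssoc _ _ _) ?_ ?_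
  · rintro ((i | i) | i)
    · exact IHxl i _ _
    · exact IHyl i _
    · exact IHzl i
  · rintro ((i | i) | i)
    · exact IHxr i _ _
    · exact IHyr i _
    · exact IHzr i

theorem add_zero_equiv (x : PGame.{u}) : x + 0 ≈ x := by
  induction x with
  | mk xl xr xL xR IHl IHr =>
  refine equiv_of_mk_equiv (Equiv.sumEmpty _ _) (Equiv.sumEmpty _ _) ?_ ?_
  · rintro (i | i)
    · exact IHl i
    · cases i
  · rintro (i | i)
    · exact IHr i
    · cases i

theorem zero_add_equiv (x : PGame.{u}) : 0 + x ≈ x :=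
  equiv_trans' (add_comm_equiv 0 x) (add_zero_equiv x)

theorem add_le_add_left' {x y z : PGame.{u}} (h : x ≤ y) : z + x ≤ z + y :=
  le_trans' (add_comm_equiv z x).1 (le_trans' (add_le_add_right' h) (add_comm_equiv y z).1)

theorem add_congr {x₁ x₂ y₁ y₂ : PGame.{u}} (hx : x₁ ≈ x₂) (hy : y₁ ≈ y₂) :
    x₁ + y₁ ≈ x₂ + y₂ :=
  ⟨le_trans' (add_le_add_right' hx.1) (add_le_add_left' hy.1),
    le_trans' (add_le_add_right' hx.2) (add_le_add_left' hy.2)⟩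

/-! Negation -/

theorem neg_le_lf_aux (x : PGame.{u}) : ∀ y : PGame.{u},
    (-y ≤ -x ↔ x ≤ y) ∧ (-y ⧏ -x ↔ x ⧏ y) := by
  induction x with
  | mk xl xr xL xR IHxl IHxr =>
  intro y
  induction y with
  | mk yl yr yL yR IHyl IHyr =>
  refine ⟨⟨fun h => ?_, fun h => ?_⟩, ⟨fun h => ?_, fun h => ?_⟩⟩
  · have h' := mk_le_mk.1 h
    exact mk_le_mk.2 ⟨fun i => (IHxl i _).2.1 (h'.2 i), fun j => (IHyr j).2.1 (h'.1 j)⟩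
  · have h' := mk_le_mk.1 h
    exact mk_le_mk.2 ⟨fun j => (IHyr j).2.2 (h'.2 j), fun i => (IHxl i _).2.2 (h'.1 i)⟩
  · rcases mk_lf_mk.1 h with ⟨j, hj⟩ | ⟨i, hi⟩
    · exact mk_lf_mk.2 (Or.inr ⟨j, (IHxr j _).1.1 hj⟩)
    · exact mk_lf_mk.2 (Or.inl ⟨i, (IHyl i).1.1 hi⟩)
  · rcases mk_lf_mk.1 h with ⟨i, hi⟩ | ⟨j, hj⟩
    · exact mk_lf_mk.2 (Or.inr ⟨i, (IHyl i).1.2 hi⟩)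
    · exact mk_lf_mk.2 (Or.inl ⟨j, (IHxr j _).1.2 hj⟩)

theorem neg_le_neg_iff' {x y : PGame.{u}} : -y ≤ -x ↔ x ≤ y :=
  (neg_le_lf_aux x y).1

theorem neg_lt_neg_iff' {x y : PGame.{u}} : -y < -x ↔ x < y := by
  rw [lt_iff_le_not_ge, lt_iff_le_not_ge, neg_le_neg_iff', neg_le_neg_iff']

theorem neg_congr {x y : PGame.{u}} (h : x ≈ y) : -x ≈ -y :=
  ⟨neg_le_neg_iff'.2 h.2, neg_le_neg_iff'.2 h.1⟩

theorem add_neg_aux (x : PGame.{u}) : x + -x ≤ 0 ∧ 0 ≤ x + -x := by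
  induction x with
  | mk xl xr xL xR IHl IHr =>
  constructor
  · rw [le_iff_forall_lf]
    refine ⟨fun k => leftMoves_add_cases (P := fun k =>
      (mk xl xr xL xR + -mk xl xr xL xR).moveLeft k ⧏ 0) k ?_ ?_, fun j => isEmptyElim j⟩
    · intro i
      rw [add_moveLeft_inl]
      refine lf_of_moveRight_le (j := toRightMovesAdd (Sum.inr i)) ?_
      exact le_trans' (add_moveRight_inr (y := -mk xl xr xL xR) i).le (IHl i).1
    · intro j
      rw [add_moveLeft_inr]
      refine lf_of_moveRight_le (j := toRightMovesAdd (Sum.inl j)) ?_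
      exact le_trans' (add_moveRight_inl (x := mk xl xr xL xR) j).le (IHr j).1
  · rw [le_iff_forall_lf]
    refine ⟨fun i => isEmptyElim i, fun k => rightMoves_add_cases (P := fun k =>
      0 ⧏ (mk xl xr xL xR + -mk xl xr xL xR).moveRight k) k ?_ ?_⟩
    · intro i
      rw [add_moveRight_inl]
      refine lf_of_le_moveLeft (i := toLeftMovesAdd (Sum.inr i)) ?_
      exact le_trans' (IHr i).2 (add_moveLeft_inr (y := -mk xl xr xL xR) i).ge
    · intro j
      rw [add_moveRight_inr]
      refine lf_of_le_moveLeft (i := toLeftMovesAdd (Sum.inl j)) ?_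
      exact le_trans' (IHl j).2 (add_moveLeft_inl (x := mk xl xr xL xR) j).ge

theorem neg_add_equiv (x : PGame.{u}) : -x + x ≈ 0 :=
  equiv_trans' (add_comm_equiv (-x) x) ⟨(add_neg_aux x).1, (add_neg_aux x).2⟩

/-! Well-foundedness -/

inductive IsOption : PGame.{u} → PGame.{u} → Prop
  | moveLeft {x : PGame.{u}} (i : x.LeftMoves) : IsOption (x.moveLeft i) x
  | moveRight {x : PGame.{u}} (i : x.RightMoves) : IsOption (x.moveRight i) x

theorem wf_isOption : WellFounded IsOption.{u} :=
  ⟨fun x => by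
    induction x with
    | mk xl xr xL xR IHl IHr =>
      refine ⟨_, fun y h => ?_⟩
      cases h with
      | moveLeft i => exact IHl i
      | moveRight j => exact IHr j⟩

def Subsequent : PGame.{u} → PGame.{u} → Prop :=
  Relation.TransGen IsOption

instance : WellFoundedRelation PGame.{u} :=
  ⟨Subsequent, wf_isOption.transGen⟩

theorem Subsequent.trans {x y z : PGame.{u}} : Subsequent x y → Subsequent y z → Subsequent x z :=
  Relation.TransGen.trans

theorem Subsequent.moveLeft {x : PGame.{u}} (i : x.LeftMoves) : Subsequent (x.moveLeft i) x :=
  Relation.TransGen.single (IsOption.moveLeft i)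

theorem Subsequent.moveRight {x : PGame.{u}} (j : x.RightMoves) : Subsequent (x.moveRight j) x :=
  Relation.TransGen.single (IsOption.moveRight j)

theorem Subsequent.mk_left {xl xr : Type u} (xL : xl → PGame.{u}) (xR : xr → PGame.{u}) (i : xl) :
    Subsequent (xL i) (mk xl xr xL xR) :=
  Subsequent.moveLeft (x := mk xl xr xL xR) i

theorem Subsequent.mk_right {xl xr : Type u} (xL : xl → PGame.{u}) (xR : xr → PGame.{u})
    (j : xr) : Subsequent (xR j) (mk xl xr xL xR) :=
  Subsequent.moveRight (x := mk xl xr xL xR) j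

end PGame

/-- Games: pregames up to equivalence. -/
abbrev Game : Type (u + 1) :=
  Quotient PGame.setoid.{u}

namespace Game

noncomputable instance : LE Game.{u} :=
  ⟨Quotient.lift₂ (fun x y : PGame.{u} => x ≤ y)
    (fun _ _ _ _ hx hy => propext (PGame.le_congr' hx hy))⟩

noncomputable instance : LT Game.{u} :=
  ⟨fun a b => a ≤ b ∧ ¬ b ≤ a⟩

noncomputable instance : PartialOrder Game.{u} where
  lt_iff_le_not_ge _ _ := Iff.rfl
  le_refl := by rintro ⟨x⟩; exact PGame.le_rfl'
  le_trans := by rintro ⟨x⟩ ⟨y⟩ ⟨z⟩; exact PGame.le_trans'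
  le_antisymm := by rintro ⟨x⟩ ⟨y⟩ h₁ h₂; exact Quot.sound ⟨h₁, h₂⟩

/-- The preorder of games (taking precedence over the generic one on quotients). -/
noncomputable instance instPreorderGame : Preorder Game.{u} :=
  PartialOrder.toPreorder

instance : Zero Game.{u} :=
  ⟨⟦0⟧⟩

instance : Add Game.{u} :=
  ⟨Quotient.map₂ (· + ·) fun _ _ hx _ _ hy => PGame.add_congr hx hy⟩

instance : Neg Game.{u} :=
  ⟨Quotient.map Neg.neg fun _ _ h => PGame.neg_congr h⟩

instance : AddCommGroup Game.{u} where
  add_assoc := by rintro ⟨x⟩ ⟨y⟩ ⟨z⟩; exact Quot.sound (PGame.add_assoc_equiv x y z)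
  zero_add := by rintro ⟨x⟩; exact Quot.sound (PGame.zero_add_equiv x)
  add_zero := by rintro ⟨x⟩; exact Quot.sound (PGame.add_zero_equiv x)
  add_comm := by rintro ⟨x⟩ ⟨y⟩; exact Quot.sound (PGame.add_comm_equiv x y)
  neg_add_cancel := by rintro ⟨x⟩; exact Quot.sound (PGame.neg_add_equiv x)
  nsmul := nsmulRec
  zsmul := zsmulRec

theorem add_le_add_right_game : ∀ (a b : Game.{u}), a ≤ b → ∀ (c : Game.{u}), a + c ≤ b + c := by
  rintro ⟨a⟩ ⟨b⟩ h ⟨c⟩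
  exact PGame.add_le_add_right' (x := a) (y := b) (z := c) h

instance : IsOrderedAddMonoid Game.{u} where
  add_le_add_left := add_le_add_right_game

end Game

namespace PGame

theorem quot_add (x y : PGame.{u}) : (⟦x + y⟧ : Game) = ⟦x⟧ + ⟦y⟧ :=
  rfl

theorem quot_neg (x : PGame.{u}) : (⟦-x⟧ : Game) = -⟦x⟧ :=
  rfl

theorem quot_sub (x y : PGame.{u}) : (⟦x - y⟧ : Game) = ⟦x⟧ - ⟦y⟧ :=
  rfl

@[simp]
theorem quot_zero : (⟦0⟧ : Game.{u}) = 0 :=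
  rfl

theorem le_iff_game_le {x y : PGame.{u}} : x ≤ y ↔ (⟦x⟧ : Game) ≤ ⟦y⟧ :=
  Iff.rfl

theorem lt_iff_game_lt {x y : PGame.{u}} : x < y ↔ (⟦x⟧ : Game) < ⟦y⟧ :=
  Iff.rfl

theorem equiv_iff_game_eq {x y : PGame.{u}} : x ≈ y ↔ (⟦x⟧ : Game) = ⟦y⟧ :=
  ⟨fun h => Quot.sound h, fun h => Quotient.exact h⟩

theorem lt_iff_sub_pos {x y : PGame.{u}} : x < y ↔ 0 < y - x := by
  rw [lt_iff_game_lt, lt_iff_game_lt, quot_sub, quot_zero, sub_pos]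

theorem add_lt_add_right_pg {x y : PGame.{u}} (h : x < y) (z : PGame.{u}) : x + z < y + z := by
  rw [lt_iff_game_lt, quot_add, quot_add]
  exact add_lt_add_of_lt_of_le (lt_iff_game_lt.1 h) le_rfl

theorem add_lt_add_left_pg {x y : PGame.{u}} (h : x < y) (z : PGame.{u}) : z + x < z + y := by
  rw [lt_iff_game_lt, quot_add, quot_add]
  exact add_lt_add_of_le_of_lt le_rfl (lt_iff_game_lt.1 h)

theorem add_lf_add_of_lf_of_le {w x y z : PGame.{u}} (hwx : w ⧏ x) (hyz : y ≤ z) :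
    w + y ⧏ x + z := by
  refine not_le.1 fun h => not_le.2 hwx ?_
  have h1 := le_iff_game_le.1 h
  have h2 := le_iff_game_le.1 hyz
  rw [quot_add, quot_add] at h1
  rw [le_iff_game_le]
  exact (add_le_add_iff_right (⟦z⟧ : Game)).1 (h1.trans (add_le_add le_rfl h2))

/-! Numeric pregames -/

def Numeric : PGame.{u} → Prop
  | ⟨_, _, L, R⟩ => (∀ i j, L i < R j) ∧ (∀ i, Numeric (L i)) ∧ ∀ j, Numeric (R j)

theorem numeric_def {x : PGame.{u}} :
    Numeric x ↔ (∀ i j, x.moveLeft i < x.moveRight j) ∧ (∀ i, Numeric (x.moveLeft i)) ∧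
      ∀ j, Numeric (x.moveRight j) := by
  cases x; exact Iff.rfl

theorem Numeric.moveLeft {x : PGame.{u}} (o : Numeric x) (i : x.LeftMoves) :
    Numeric (x.moveLeft i) :=
  (numeric_def.1 o).2.1 i

theorem Numeric.moveRight {x : PGame.{u}} (o : Numeric x) (j : x.RightMoves) :
    Numeric (x.moveRight j) :=
  (numeric_def.1 o).2.2 j

theorem lf_asymm_aux (x : PGame.{u}) :
    ∀ y : PGame.{u}, Numeric x → Numeric y → x ⧏ y → ¬ y ⧏ x := by
  induction x with
  | mk xl xr xL xR IHxl IHxr =>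
  intro y
  cases y with
  | mk yl yr yL yR =>
  intro ox oy h₁' h₂'
  rcases mk_lf_mk.1 h₁' with ⟨i, h₁⟩ | ⟨j, h₁⟩ <;> rcases mk_lf_mk.1 h₂' with ⟨i', h₂⟩ | ⟨j', h₂⟩
  · exact IHxl i' _ (ox.moveLeft i') (oy.moveLeft i) (le_moveLeft_lf h₁ i') (le_moveLeft_lf h₂ i)
  · exact not_le.2 (lf_of_lt ((numeric_def.1 oy).1 i j')) (le_trans' h₂ h₁)
  · exact not_le.2 (lf_of_lt ((numeric_def.1 ox).1 i' j)) (le_trans' h₁ h₂)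
  · exact IHxr j _ (ox.moveRight j) (oy.moveRight j') (lf_moveRight_of_le h₁ j')
      (lf_moveRight_of_le h₂ j)

theorem Numeric.lt_of_lf {x y : PGame.{u}} (ox : Numeric x) (oy : Numeric y) (h : x ⧏ y) :
    x < y :=
  lt_iff_le_not_ge.2 ⟨not_lf.1 (lf_asymm_aux x y ox oy h), not_le.2 h⟩

theorem Numeric.moveLeft_lt {x : PGame.{u}} (o : Numeric x) (i : x.LeftMoves) : x.moveLeft i < x :=
  (o.moveLeft i).lt_of_lf o (moveLeft_lf i)

theorem Numeric.lt_moveRight {x : PGame.{u}} (o : Numeric x) (j : x.RightMoves) :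
    x < x.moveRight j :=
  o.lt_of_lf (o.moveRight j) (lf_moveRight j)

theorem numeric_zero : Numeric (0 : PGame.{u}) :=
  ⟨fun i => i.elim, fun i => i.elim, fun j => j.elim⟩

theorem numeric_one : Numeric (1 : PGame.{u}) :=
  ⟨fun _ j => j.elim, fun _ => numeric_zero, fun j => j.elim⟩

theorem numeric_powHalf (n : ℕ) : Numeric (powHalf.{u} n) := by
  induction n with
  | zero => exact numeric_one
  | succ n hn =>
    refine ⟨fun _ _ => ?_, fun _ => numeric_zero, fun _ => hn⟩
    cases n with
    | zero => exact numeric_one.moveLeft_lt PUnit.unit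
    | succ n => exact hn.moveLeft_lt PUnit.unit

theorem Numeric.neg : ∀ {x : PGame.{u}} (_ : Numeric x), Numeric (-x)
  | ⟨_, _, _, _⟩, o =>
    ⟨fun j i => neg_lt_neg_iff'.2 (o.1 i j), fun j => (o.2.2 j).neg, fun i => (o.2.1 i).neg⟩

theorem numeric_add_aux (x : PGame.{u}) :
    ∀ y : PGame.{u}, Numeric x → Numeric y → Numeric (x + y) := by
  induction x with
  | mk xl xr xL xR IHxl IHxr =>
  intro y
  induction y with
  | mk yl yr yL yR IHyl IHyr =>
  intro ox oy
  rw [numeric_def]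
  refine ⟨?_, ?_, ?_⟩
  · rintro (ix | iy) (jx | jy)
    · exact add_lt_add_right_pg ((numeric_def.1 ox).1 ix jx) (mk yl yr yL yR)
    · exact (IHxl ix _ (ox.moveLeft ix) oy).lt_of_lf (IHyr jy ox (oy.moveRight jy))
        (add_lf_add_of_lf_of_le (moveLeft_lf (x := mk xl xr xL xR) ix) (oy.lt_moveRight jy).le)
    · exact (IHyl iy ox (oy.moveLeft iy)).lt_of_lf (IHxr jx _ (ox.moveRight jx) oy)
        (add_lf_add_of_lf_of_le (lf_moveRight (x := mk xl xr xL xR) jx) (oy.moveLeft_lt iy).le)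
    · exact add_lt_add_left_pg ((numeric_def.1 oy).1 iy jy) (mk xl xr xL xR)
  · rintro (ix | iy)
    · exact IHxl ix _ (ox.moveLeft ix) oy
    · exact IHyl iy ox (oy.moveLeft iy)
  · rintro (jx | jy)
    · exact IHxr jx _ (ox.moveRight jx) oy
    · exact IHyr jy ox (oy.moveRight jy)

theorem Numeric.add {x y : PGame.{u}} (ox : Numeric x) (oy : Numeric y) : Numeric (x + y) :=
  numeric_add_aux x y ox oy

theorem Numeric.sub {x y : PGame.{u}} (ox : Numeric x) (oy : Numeric y) : Numeric (x - y) :=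
  ox.add oy.neg

end PGame

end SetTheory

namespace SeqCompound

open PGame

theorem dicotic_def {G : PGame} : Dicotic G ↔
    ((Nonempty G.LeftMoves ↔ Nonempty G.RightMoves) ∧
      (∀ i, Dicotic (G.moveLeft i)) ∧ (∀ j, Dicotic (G.moveRight j))) := by
  cases G
  exact Iff.rfl

theorem seqc_mk_pos {α β : Type u} {L : α → PGame} {R : β → PGame} (H : PGame)
    (hα : Nonempty α) (hβ : Nonempty β) :
    seqc (PGame.mk α β L R) H =
      PGame.mk α β (fun a => seqc (L a) H) (fun b => seqc (R b) H) := by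
  rw [seqc, if_pos hα, if_pos hβ]

theorem seqc_mk_empty {α β : Type u} {L : α → PGame} {R : β → PGame} (H : PGame)
    (hα : ¬Nonempty α) (hβ : ¬Nonempty β) :
    seqc (PGame.mk α β L R) H = H := by
  rw [seqc, if_neg hα, if_neg hβ]

theorem Dicotic.neg : ∀ {G : PGame}, Dicotic G → Dicotic (-G)
  | PGame.mk _ _ _ _, ⟨h, hL, hR⟩ =>
    ⟨h.symm, fun b => (hR b).neg, fun a => (hL a).neg⟩

theorem Dicotic.add : ∀ {G H : PGame}, Dicotic G → Dicotic H → Dicotic (G + H) := by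
  intro G H hG hH
  rw [dicotic_def] at hG hH ⊢
  refine ⟨?_, ?_, ?_⟩
  · rw [toLeftMovesAdd.symm.nonempty_congr, toRightMovesAdd.symm.nonempty_congr,
      nonempty_sum, nonempty_sum]
    rw [hG.1, hH.1]
  · intro i
    refine leftMoves_add_cases (P := fun i => Dicotic ((G + H).moveLeft i)) i ?_ ?_
    · intro a
      rw [add_moveLeft_inl]
      exact Dicotic.add (hG.2.1 a) (dicotic_def.mpr hH)
    · intro a
      rw [add_moveLeft_inr]
      exact Dicotic.add (dicotic_def.mpr hG) (hH.2.1 a)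
  · intro j
    refine rightMoves_add_cases (P := fun j => Dicotic ((G + H).moveRight j)) j ?_ ?_
    · intro b
      rw [add_moveRight_inl]
      exact Dicotic.add (hG.2.2 b) (dicotic_def.mpr hH)
    · intro b
      rw [add_moveRight_inr]
      exact Dicotic.add (dicotic_def.mpr hG) (hH.2.2 b)
termination_by G H => (G, H)
decreasing_by all_goals (solve_by_elim [Prod.Lex.left, Prod.Lex.right, PGame.Subsequent.moveLeft, PGame.Subsequent.moveRight, PGame.Subsequent.mk_left, PGame.Subsequent.mk_right, PGame.Subsequent.trans])

theorem Dicotic.not_numeric_le : ∀ {D : PGame}, Dicotic D →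
    ∀ {w : PGame}, w.Numeric → 0 < w → ¬w ≤ D := by
  intro D hD w hw h0 hle
  obtain ⟨hiff, hL, hR⟩ := dicotic_def.mp hD
  by_cases hβ : Nonempty D.RightMoves
  · obtain ⟨b⟩ := hβ
    have hlf : w ⧏ D.moveRight b := (le_iff_forall_lf.mp hle).2 b
    rcases lf_iff_exists_le.mp hlf with ⟨i, hwle⟩ | ⟨j, hwle⟩
    · exact Dicotic.not_numeric_le ((dicotic_def.mp (hR b)).2.1 i) hw h0 hwle
    · exact Dicotic.not_numeric_le (hR b) (hw.moveRight j)
        (h0.trans (hw.lt_moveRight j)) hwle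
  · have hα : ¬Nonempty D.LeftMoves := fun h => hβ (hiff.mp h)
    have hD0 : D ≤ 0 := by
      rw [le_iff_forall_lf]
      constructor
      · intro i; exact absurd ⟨i⟩ hα
      · intro j; exact isEmptyElim j
    exact (h0.trans_le (hle.trans hD0)).false
termination_by D => D
decreasing_by all_goals (solve_by_elim [Prod.Lex.left, Prod.Lex.right, PGame.Subsequent.moveLeft, PGame.Subsequent.moveRight, PGame.Subsequent.mk_left, PGame.Subsequent.mk_right, PGame.Subsequent.trans])

theorem Dicotic.le_of_numeric_pos {D z : PGame} (hD : Dicotic D) (hz : z.Numeric)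
    (h0 : 0 < z) : D ≤ z := by
  rw [le_iff_forall_lf]
  constructor
  · intro i
    rw [← PGame.not_le]
    exact ((dicotic_def.mp hD).2.1 i).not_numeric_le hz h0
  · intro j
    rw [← PGame.not_le]
    exact hD.not_numeric_le (hz.moveRight j) (h0.trans (hz.lt_moveRight j))

theorem seqc_le_seqc : ∀ {G : PGame}, Dicotic G →
    ∀ {X X' : PGame}, X ≤ X' → seqc G X ≤ seqc G X'
  | PGame.mk α β L R, hG, X, X', h => by
    obtain ⟨hiff, hL, hR⟩ := hG
    by_cases hα : Nonempty α
    · have hβ : Nonempty β := hiff.mp hα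
      rw [seqc_mk_pos X hα hβ, seqc_mk_pos X' hα hβ, le_iff_forall_lf]
      constructor
      · intro i
        exact lf_of_le_moveLeft (i := i) (seqc_le_seqc (hL i) h)
      · intro j
        exact lf_of_moveRight_le (j := j) (seqc_le_seqc (hR j) h)
    · have hβ : ¬Nonempty β := fun h' => hα (hiff.mpr h')
      rw [seqc_mk_empty X hα hβ, seqc_mk_empty X' hα hβ]
      exact h
termination_by G => G
decreasing_by all_goals (solve_by_elim [Prod.Lex.left, Prod.Lex.right, PGame.Subsequent.moveLeft, PGame.Subsequent.moveRight, PGame.Subsequent.mk_left, PGame.Subsequent.mk_right, PGame.Subsequent.trans])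

theorem seqc_numeric : ∀ (G : PGame), Dicotic G → ∀ (Y : PGame), Y.Numeric →
    seqc G Y ≈ G + Y
  | PGame.mk α β L R, hG, Y, hY => by
    obtain ⟨hiff, hL, hR⟩ := hG
    have hG' : Dicotic (PGame.mk α β L R) := ⟨hiff, hL, hR⟩
    by_cases hα : Nonempty α
    · have hβ : Nonempty β := hiff.mp hα
      rw [seqc_mk_pos Y hα hβ]
      constructor
      · -- seqc ≤ G + Y
        rw [le_iff_forall_lf]
        constructor
        · intro i
          have hIH := seqc_numeric (L i) (hL i) Y hY
          have hlf : L i + Y ⧏ PGame.mk α β L R + Y := by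
            have := moveLeft_lf (x := PGame.mk α β L R + Y) (toLeftMovesAdd (Sum.inl i))
            rwa [add_moveLeft_inl (x := PGame.mk α β L R) (y := Y) i] at this
          exact hIH.1.trans_lf hlf
        · intro j
          refine rightMoves_add_cases
            (P := fun j => (PGame.mk α β (fun a => seqc (L a) Y) fun b => seqc (R b) Y) ⧏
              (PGame.mk α β L R + Y).moveRight j) j ?_ ?_
          · intro b
            rw [add_moveRight_inl]
            exact lf_of_moveRight_le (j := b) (seqc_numeric (R b) (hR b) Y hY).1
          · intro jy
            rw [add_moveRight_inr]
            obtain ⟨b⟩ := hβ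
            have hIH := (seqc_numeric (R b) (hR b) Y hY).1
            have hA : R b - PGame.mk α β L R ≤ Y.moveRight jy - Y := by
              refine Dicotic.le_of_numeric_pos ((hR b).add hG'.neg)
                ((hY.moveRight jy).sub hY) ?_
              rw [← PGame.lt_iff_sub_pos]
              exact hY.lt_moveRight jy
            have hkey : R b + Y ≤ PGame.mk α β L R + Y.moveRight jy := by
              rw [le_iff_game_le] at hA ⊢
              simp only [quot_sub, quot_add] at hA ⊢
              rw [sub_le_sub_iff] at hA
              calc (⟦R b⟧ : Game) + ⟦Y⟧ ≤ ⟦Y.moveRight jy⟧ + ⟦PGame.mk α β L R⟧ := hA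
                _ = ⟦PGame.mk α β L R⟧ + ⟦Y.moveRight jy⟧ := add_comm _ _
            exact lf_of_moveRight_le (j := b) (hIH.trans hkey)
      · -- G + Y ≤ seqc
        rw [le_iff_forall_lf]
        constructor
        · intro i
          refine leftMoves_add_cases
            (P := fun i => (PGame.mk α β L R + Y).moveLeft i ⧏
              PGame.mk α β (fun a => seqc (L a) Y) fun b => seqc (R b) Y) i ?_ ?_
          · intro a
            rw [add_moveLeft_inl]
            exact lf_of_le_moveLeft (i := a) (seqc_numeric (L a) (hL a) Y hY).2
          · intro iy
            rw [add_moveLeft_inr]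
            obtain ⟨a⟩ := hα
            have hIH := (seqc_numeric (L a) (hL a) Y hY).2
            have hA : PGame.mk α β L R - L a ≤ Y - Y.moveLeft iy := by
              refine Dicotic.le_of_numeric_pos (hG'.add (hL a).neg)
                (hY.sub (hY.moveLeft iy)) ?_
              rw [← PGame.lt_iff_sub_pos]
              exact hY.moveLeft_lt iy
            have hkey : PGame.mk α β L R + Y.moveLeft iy ≤ L a + Y := by
              rw [le_iff_game_le] at hA ⊢
              simp only [quot_sub, quot_add] at hA ⊢
              rw [sub_le_sub_iff] at hA
              calc (⟦PGame.mk α β L R⟧ : Game) + ⟦Y.moveLeft iy⟧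
                  ≤ ⟦Y⟧ + ⟦L a⟧ := hA
                _ = ⟦L a⟧ + ⟦Y⟧ := add_comm _ _
            exact lf_of_le_moveLeft (i := a) (hkey.trans hIH)
        · intro b
          have hlf : PGame.mk α β L R + Y ⧏ R b + Y := by
            have := lf_moveRight (x := PGame.mk α β L R + Y) (toRightMovesAdd (Sum.inl b))
            rwa [add_moveRight_inl (x := PGame.mk α β L R) (y := Y) b] at this
          exact hlf.trans_le (seqc_numeric (R b) (hR b) Y hY).2
    · have hβ : ¬Nonempty β := fun h' => hα (hiff.mpr h')
      rw [seqc_mk_empty Y hα hβ, equiv_iff_game_eq, quot_add]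
      have h0 : (⟦PGame.mk α β L R⟧ : Game) = 0 := by
        rw [← quot_zero, ← equiv_iff_game_eq]
        constructor <;> rw [le_iff_forall_lf] <;> constructor <;> intro k
        · exact absurd ⟨k⟩ hα
        · exact isEmptyElim k
        · exact isEmptyElim k
        · exact absurd ⟨k⟩ hβ
      rw [h0, zero_add]
termination_by G => G
decreasing_by all_goals (solve_by_elim [Prod.Lex.left, Prod.Lex.right, PGame.Subsequent.moveLeft, PGame.Subsequent.moveRight, PGame.Subsequent.mk_left, PGame.Subsequent.mk_right, PGame.Subsequent.trans])

/-- `n` copies of a pregame added together. -/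
def nsm : ℕ → PGame → PGame
  | 0, _ => 0
  | k + 1, P => nsm k P + P

theorem nsm_numeric : ∀ (k : ℕ) {P : PGame}, P.Numeric → (nsm k P).Numeric
  | 0, _, _ => numeric_zero
  | k + 1, _, h => (nsm_numeric k h).add h

theorem quot_nsm (k : ℕ) (P : PGame) : (⟦nsm k P⟧ : Game) = k • ⟦P⟧ := by
  induction k with
  | zero => simp [nsm]
  | succ n ih => rw [nsm, quot_add, ih, succ_nsmul]

/-- `m` copies (with sign) of a pregame added together. -/
def zsm : ℤ → PGame → PGame
  | Int.ofNat k, P => nsm k P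
  | Int.negSucc k, P => -nsm (k + 1) P

theorem zsm_numeric : ∀ (m : ℤ) {P : PGame}, P.Numeric → (zsm m P).Numeric
  | Int.ofNat k, _, h => nsm_numeric k h
  | Int.negSucc k, _, h => (nsm_numeric (k + 1) h).neg

theorem quot_zsm (m : ℤ) (P : PGame) : (⟦zsm m P⟧ : Game) = m • ⟦P⟧ := by
  cases m with
  | ofNat k => rw [Int.ofNat_eq_coe, natCast_zsmul]; exact quot_nsm k P
  | negSucc k => rw [zsm, quot_neg, quot_nsm, negSucc_zsmul]

theorem nsmulPG_eq_nsm (k : ℕ) (P : PGame) : PGame.nsmulPG k P = nsm k P := by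
  induction k with
  | zero => rfl
  | succ n ih => rw [PGame.nsmulPG, nsm, ih]

theorem zsmulPG_eq_zsm (m : ℤ) (P : PGame) : PGame.zsmulPG m P = zsm m P := by
  cases m with
  | ofNat k => exact nsmulPG_eq_nsm k P
  | negSucc k => rw [PGame.zsmulPG, zsm, nsmulPG_eq_nsm]

end SeqCompound

open SeqCompound in
/-- if `G` is dicotic and `X` is a game of dyadic rational value,
then `G → X = G + X` as game values. -/
theorem seqc_number (G X : PGame) [PGame.Short G] [PGame.Short X]
    (hG : Dicotic G)
    (hX : ∃ (m : ℤ) (n : ℕ), X ≈ PGame.zsmulPG m (PGame.powHalf n)) :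
    seqc G X ≈ G + X := by
  obtain ⟨m, n, hXv⟩ := hX
  set Y := zsm m (PGame.powHalf n) with hY
  have hYnum : Y.Numeric := zsm_numeric m (PGame.numeric_powHalf n)
  have hXY : X ≈ Y := by
    rw [hY, ← zsmulPG_eq_zsm]; exact hXv
  have h1 : seqc G X ≈ seqc G Y :=
    ⟨seqc_le_seqc hG hXY.1, seqc_le_seqc hG hXY.2⟩
  have h2 := seqc_numeric G hG Y hYnum
  rw [PGame.equiv_iff_game_eq] at h1 h2 ⊢
  rw [h1, h2, PGame.quot_add, PGame.quot_add, ← PGame.equiv_iff_game_eq.mp hXY]
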